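/- arXiv:cs/9907041 — 2 statements merged into one kernel-verified Lean document; each statement's English description precedes it below -/
import Mathlib

section
/- For any f, g : GF(2)^n → GF(2), the cardinality of the set {v ∈ GF(2)^n : ∀ u, f(u) = g(v + u)} is either 0 or a power of 2. -/
theorem stmt_2 (n : ℕ) (f g : (Fin n → ZMod 2) → ZMod 2) :
    Nat.card {v : Fin n → ZMod 2 | ∀ u, f u = g (v + u)} = 0 ∨
      ∃ i : ℕ, Nat.card {v : Fin n → ZMod 2 | ∀ u, f u = g (v + u)} = 2 ^ i := by
  set S := {v : Fin n → ZMod 2 | ∀ u, f u = g (v + u)} with hS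
  by_cases hne : S.Nonempty
  · right
    obtain ⟨v₀, hv₀⟩ := hne
    -- the stabilizer subgroup
    set H : AddSubgroup (Fin n → ZMod 2) :=
      { carrier := {w | ∀ u, g u = g (w + u)}
        zero_mem' := by intro u; simp
        add_mem' := by
          intro a b ha hb u
          have := ha (b + u)
          rw [hb u, this, add_assoc]
        neg_mem' := by
          intro a ha u
          have := ha (-a + u)
          rw [this]; ring_nf } with hH
    -- bijection S ≃ H via v ↦ v - v₀
    have key : ∀ v, v ∈ S ↔ v - v₀ ∈ H := by
      intro v
      constructor
      · intro hv u
        have h1 := hv₀ (u - v₀)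
        have h2 := hv (u - v₀)
        rw [h1] at h2
        convert h2 using 2 <;> ring
      · intro hv u
        have h1 := hv (v₀ + u)
        rw [hv₀ u, h1]
        ring_nf
    have hcard : Nat.card S = Nat.card H := by
      apply Nat.card_congr
      exact {
        toFun := fun v => ⟨v.1 - v₀, (key v.1).mp v.2⟩
        invFun := fun w => ⟨w.1 + v₀, by
          have := (key (w.1 + v₀)).mpr (by simpa using w.2)
          exact this⟩
        left_inv := fun v => by ext : 1; simp
        right_inv := fun w => by ext : 1; simp }
    have hdvd : Nat.card H ∣ Nat.card (Fin n → ZMod 2) :=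
      AddSubgroup.card_addSubgroup_dvd_card H
    have hcg : Nat.card (Fin n → ZMod 2) = 2 ^ n := by
      simp [Nat.card_eq_fintype_card]
    rw [hcg] at hdvd
    obtain ⟨i, _, hi⟩ := (Nat.dvd_prime_pow Nat.prime_two).mp hdvd
    exact ⟨i, by rw [hcard, hi]⟩
  · left
    rw [Set.not_nonempty_iff_eq_empty] at hne
    simp [hne]
end

section
/- Let f, m, w be natural numbers with f < 2^w and m < 2^w. Then 2^{w+1} − f + m is a power of 2 if and only if m = f. -/
theorem stmt_13 (f m w : ℕ) (hf : f < 2 ^ w) (hm : m < 2 ^ w) :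
    (∃ i : ℕ, 2 ^ (w + 1) - f + m = 2 ^ i) ↔ m = f := by
  have hfle : f ≤ 2 ^ (w + 1) := le_of_lt (lt_of_lt_of_le hf (by
    simpa using Nat.pow_le_pow_right (by norm_num) (Nat.le_succ w)))
  constructor
  · rintro ⟨i, hi⟩
    have hlow : 2 ^ w < 2 ^ i := by
      rw [← hi]
      have : 2 ^ w < 2 ^ (w + 1) - f := by
        have : 2 ^ (w + 1) = 2 ^ w + 2 ^ w := by ring
        omega
      omega
    have hhigh : 2 ^ i < 2 ^ (w + 2) := by
      rw [← hi]
      have h1 : 2 ^ (w + 2) = 2 ^ w + 2 ^ w + 2 ^ w + 2 ^ w := by ring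
      have h2 : 2 ^ (w + 1) = 2 ^ w + 2 ^ w := by ring
      omega
    have hi1 : i = w + 1 := by
      have := (Nat.pow_lt_pow_iff_right (a := 2) (by norm_num)).mp hlow
      have := (Nat.pow_lt_pow_iff_right (a := 2) (by norm_num)).mp hhigh
      omega
    subst hi1
    omega
  · rintro rfl
    exact ⟨w + 1, by omega⟩
end
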